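/- Let d ∈ ℕ, c ≥ 0, ε > 0 and m ∈ ℕ₀. Define ψ^u_{c,0}(x) := |x|^{-c/2-d/2-ε/2} for |x| > e_0 = 0, and for m ≥ 1 define ψ^u_{c,m}(x) := |x|^{-c/2-d/2} ∏_{j=1}^m (ln_j(|x|))^{-1/2} · (ln_m(|x|))^{-ε/2} for |x| > e_m. Define W^{c,0}(x) := (d(4-d)+c²+4c+ε(2c+4+ε))/(4|x|²), and for m ≥ 1 define W^{c,m}(x) := (d(4-d)+c²+4c)/(4|x|²) + ((c+2)/(2|x|²)) Σ_{k=1}^m ∏_{j=1}^k (ln_j(|x|))^{-1} + ((cε+2ε)/(2|x|²)) ∏_{j=1}^m (ln_j(|x|))^{-1} + (1/(4|x|²)) ( Σ_{k=1}^m ∏_{j=1}^k (ln_j(|x|))^{-1} + ε ∏_{j=1}^m (ln_j(|x|))^{-1} )² + (1/(2|x|²)) Σ_{i=1}^m Σ_{j=1}^i ∏_{k=1}^i (ln_k(|x|))^{-1} ∏_{l=1}^j (ln_l(|x|))^{-1} + (ε/(2|x|²)) ∏_{l=1}^m (ln_l(|x|))^{-1} · Σ_{i=1}^m ∏_{k=1}^i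 (ln_k(|x|))^{-1}. Then ψ^u_{c,m} is smooth on {x : |x| > e_m} and satisfies (-Δ + W^{c,m}) ψ^u_{c,m}(x) = 0 pointwise for all |x| > e_m. -/

import Mathlib

open MeasureTheory Real Filter Finset
open scoped RealInnerProductSpace ENNReal Topology

/-- Iterated exponential: `iterExp 0 = 0`, `iterExp (n+1) = exp (iterExp n)`
(the `e_n` of the paper). -/
noncomputable def iterExp : ℕ → ℝ
  | 0 => 0
  | n + 1 => Real.exp (iterExp n)

/-- Iterated logarithm: `iterLog 1 r = log r`, `iterLog (n+1) r = log (iterLog n r)`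
(the `ln_n` of the paper). -/
noncomputable def iterLog : ℕ → ℝ → ℝ
  | 0, r => r
  | n + 1, r => Real.log (iterLog n r)

/-- The Euclidean Laplacian `Δ f x = ∑ i, ∂²f/∂x_i² (x)`. -/
noncomputable def lap {d : ℕ} (f : EuclideanSpace ℝ (Fin d) → ℝ)
    (x : EuclideanSpace ℝ (Fin d)) : ℝ :=
  ∑ i : Fin d, fderiv ℝ (fun y => fderiv ℝ f y (EuclideanSpace.single i 1)) x
    (EuclideanSpace.single i 1)

/-- `ψᵘ_{c,m}` : for `m = 0` it is `|x|^{-c/2-d/2-ε/2}`, and for `m ≥ 1` it is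
`|x|^{-c/2-d/2} ∏_{j=1}^m (ln_j |x|)^{-1/2} · (ln_m |x|)^{-ε/2}`. -/
noncomputable def psiU (d : ℕ) (c ε : ℝ) (m : ℕ) (x : EuclideanSpace ℝ (Fin d)) : ℝ :=
  if m = 0 then ‖x‖ ^ (-(c / 2) - (d : ℝ) / 2 - ε / 2)
  else ‖x‖ ^ (-(c / 2) - (d : ℝ) / 2) * (∏ j ∈ Finset.Icc 1 m, (iterLog j ‖x‖) ^ (-(1 : ℝ) / 2))
        * (iterLog m ‖x‖) ^ (-(ε / 2))

/-- The potential `W^{c,m}` with parameter `ε` (as a function of `r = |x|`). -/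
noncomputable def Wu (d : ℕ) (c ε : ℝ) (m : ℕ) (r : ℝ) : ℝ :=
  if m = 0 then ((d : ℝ) * (4 - (d : ℝ)) + c ^ 2 + 4 * c + ε * (2 * c + 4 + ε)) / (4 * r ^ 2)
  else ((d : ℝ) * (4 - (d : ℝ)) + c ^ 2 + 4 * c) / (4 * r ^ 2)
    + ((c + 2) / (2 * r ^ 2)) * ∑ k ∈ Finset.Icc 1 m, ∏ j ∈ Finset.Icc 1 k, (iterLog j r)⁻¹
    + ((c * ε + 2 * ε) / (2 * r ^ 2)) * ∏ j ∈ Finset.Icc 1 m, (iterLog j r)⁻¹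
    + (1 / (4 * r ^ 2)) * (∑ k ∈ Finset.Icc 1 m, ∏ j ∈ Finset.Icc 1 k, (iterLog j r)⁻¹
        + ε * ∏ j ∈ Finset.Icc 1 m, (iterLog j r)⁻¹) ^ 2
    + (1 / (2 * r ^ 2)) * ∑ i ∈ Finset.Icc 1 m, ∑ j ∈ Finset.Icc 1 i,
        (∏ k ∈ Finset.Icc 1 i, (iterLog k r)⁻¹) * ∏ l ∈ Finset.Icc 1 j, (iterLog l r)⁻¹
    + (ε / (2 * r ^ 2)) * (∏ l ∈ Finset.Icc 1 m, (iterLog l r)⁻¹)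
        * ∑ i ∈ Finset.Icc 1 m, ∏ k ∈ Finset.Icc 1 i, (iterLog k r)⁻¹

/-! ### Auxiliary lemmas -/

lemma iterExp_nonneg (n : ℕ) : 0 ≤ iterExp n := by
  cases n with
  | zero => simp [iterExp]
  | succ n => exact (Real.exp_pos _).le

lemma iterLog_gt {m : ℕ} : ∀ j ≤ m, ∀ {r : ℝ}, iterExp m < r → iterExp (m - j) < iterLog j r := by
  intro j
  induction j with
  | zero => intro _ r hr; simpa [iterLog] using hr
  | succ j ih =>
    intro hj r hr
    have h1 : iterExp (m - j) < iterLog j r := ih (Nat.le_of_succ_le hj) hr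
    have h2 : m - j = (m - (j+1)) + 1 := by omega
    rw [h2] at h1
    have h3 : Real.log (iterExp ((m - (j+1)) + 1)) < Real.log (iterLog j r) :=
      Real.log_lt_log (by exact Real.exp_pos _) h1
    simpa [iterLog, iterExp, Real.log_exp] using h3

lemma iterLog_pos {m j : ℕ} (hj : j ≤ m) {r : ℝ} (hr : iterExp m < r) : 0 < iterLog j r :=
  lt_of_le_of_lt (iterExp_nonneg _) (iterLog_gt j hj hr)

/-- `Dfun m r = ∏_{i<m} (iterLog i r)⁻¹`, the derivative of `iterLog m` at `r`. -/
noncomputable def Dfun (m : ℕ) (r : ℝ) : ℝ := ∏ i ∈ Finset.range m, (iterLog i r)⁻¹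

lemma hasDerivAt_iterLog (j : ℕ) (r : ℝ) (h : ∀ i < j, iterLog i r ≠ 0) :
    HasDerivAt (iterLog j) (Dfun j r) r := by
  induction j with
  | zero => simpa [iterLog, Dfun] using hasDerivAt_id' r
  | succ j ih =>
    have hj := ih (fun i hi => h i (hi.trans (Nat.lt_succ_self j)))
    have h0 := (Real.hasDerivAt_log (h j (Nat.lt_succ_self j))).comp r hj
    have : Dfun (j+1) r = (iterLog j r)⁻¹ * Dfun j r := by
      rw [Dfun, Dfun, Finset.prod_range_succ]; ring
    rw [this]
    exact h0

lemma hasDerivAt_Dfun (m : ℕ) (r : ℝ) (h : ∀ i < m, iterLog i r ≠ 0) :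
    HasDerivAt (fun s => Dfun m s)
      (-(Dfun m r * ∑ i ∈ Finset.range m, Dfun (i+1) r)) r := by
  induction m with
  | zero => simpa [Dfun] using hasDerivAt_const r (1:ℝ)
  | succ m ih =>
    have hm := ih (fun i hi => h i (hi.trans (Nat.lt_succ_self m)))
    have hl := hasDerivAt_iterLog m r (fun i hi => h i (hi.trans (Nat.lt_succ_self m)))
    have hne := h m (Nat.lt_succ_self m)
    have hinv := hl.fun_inv hne
    have hmul := hm.fun_mul hinv
    have hfun : (fun s => Dfun m s * (iterLog m s)⁻¹) = fun s => Dfun (m+1) s := by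
      funext s; rw [Dfun, Dfun, Finset.prod_range_succ]
    rw [hfun] at hmul
    refine hmul.congr_deriv (Eq.symm ?_)
    rw [Dfun, Finset.prod_range_succ, Finset.sum_range_succ, Dfun,
      Finset.prod_range_succ, ← Dfun]
    field_simp
    ring

lemma contDiffAt_iterLog (j : ℕ) (r : ℝ) (h : ∀ i < j, iterLog i r ≠ 0) :
    ContDiffAt ℝ (⊤ : ℕ∞) (iterLog j) r := by
  induction j with
  | zero => exact contDiffAt_id
  | succ j ih =>
    exact (Real.contDiffAt_log.2 (h j (Nat.lt_succ_self j))).comp r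
      (ih (fun i hi => h i (hi.trans (Nat.lt_succ_self j))))

/-- The logarithm of `ψᵘ` as a function of `r`. -/
noncomputable def hfun (a ε : ℝ) (m : ℕ) (r : ℝ) : ℝ :=
  a * Real.log r - (1/2) * ∑ j ∈ Finset.Icc 1 m, iterLog (j+1) r - (ε/2) * iterLog (m+1) r

/-- The derivative of `hfun`. -/
noncomputable def hderiv (a ε : ℝ) (m : ℕ) (r : ℝ) : ℝ :=
  a * r⁻¹ - (1/2) * ∑ j ∈ Finset.Icc 1 m, Dfun (j+1) r - (ε/2) * Dfun (m+1) r

/-- The second derivative of `hfun`. -/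
noncomputable def hderiv2 (a ε : ℝ) (m : ℕ) (r : ℝ) : ℝ :=
  -(a * (r^2)⁻¹)
    + (1/2) * ∑ j ∈ Finset.Icc 1 m, (Dfun (j+1) r * ∑ i ∈ Finset.range (j+1), Dfun (i+1) r)
    + (ε/2) * (Dfun (m+1) r * ∑ i ∈ Finset.range (m+1), Dfun (i+1) r)

lemma contDiffAt_hfun (a ε : ℝ) (m : ℕ) (r : ℝ) (h : ∀ i < m + 1, iterLog i r ≠ 0) :
    ContDiffAt ℝ (⊤ : ℕ∞) (hfun a ε m) r := by
  have hr0 : r ≠ 0 := h 0 (Nat.succ_pos m)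
  have hterm : ∀ j ∈ Finset.Icc 1 m, ContDiffAt ℝ (⊤ : ℕ∞) (fun s => iterLog (j+1) s) r := by
    intro j hj
    exact contDiffAt_iterLog (j+1) r (fun i hi => h i (by
      have := (Finset.mem_Icc.1 hj).2; omega))
  have hsum : ContDiffAt ℝ (⊤ : ℕ∞) (fun s => ∑ j ∈ Finset.Icc 1 m, iterLog (j+1) s) r :=
    ContDiffAt.sum hterm
  have hlast : ContDiffAt ℝ (⊤ : ℕ∞) (fun s => iterLog (m+1) s) r :=
    contDiffAt_iterLog (m+1) r h
  have hlog : ContDiffAt ℝ (⊤ : ℕ∞) Real.log r := Real.contDiffAt_log.2 hr0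
  exact ((contDiffAt_const.mul hlog).sub (contDiffAt_const.mul hsum)).sub
    (contDiffAt_const.mul hlast)

lemma hasDerivAt_hfun (a ε : ℝ) (m : ℕ) (r : ℝ) (h : ∀ i < m + 1, iterLog i r ≠ 0) :
    HasDerivAt (hfun a ε m) (hderiv a ε m r) r := by
  have hr0 : r ≠ 0 := h 0 (Nat.succ_pos m)
  have hsum : HasDerivAt (fun s => ∑ j ∈ Finset.Icc 1 m, iterLog (j+1) s)
      (∑ j ∈ Finset.Icc 1 m, Dfun (j+1) r) r := by
    apply HasDerivAt.fun_sum
    intro j hj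
    exact hasDerivAt_iterLog (j+1) r (fun i hi => h i (by
      have := (Finset.mem_Icc.1 hj).2; omega))
  have hlast : HasDerivAt (fun s => iterLog (m+1) s) (Dfun (m+1) r) r :=
    hasDerivAt_iterLog (m+1) r h
  have hlog := (Real.hasDerivAt_log hr0).const_mul a
  exact (hlog.sub (hsum.const_mul (1/2))).sub (hlast.const_mul (ε/2))

lemma hasDerivAt_hderiv (a ε : ℝ) (m : ℕ) (r : ℝ) (h : ∀ i < m + 1, iterLog i r ≠ 0) :
    HasDerivAt (hderiv a ε m) (hderiv2 a ε m r) r := by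
  have hr0 : r ≠ 0 := h 0 (Nat.succ_pos m)
  have hinv := (hasDerivAt_inv hr0).const_mul a
  have hsum : HasDerivAt (fun s => ∑ j ∈ Finset.Icc 1 m, Dfun (j+1) s)
      (∑ j ∈ Finset.Icc 1 m, -(Dfun (j+1) r * ∑ i ∈ Finset.range (j+1), Dfun (i+1) r)) r := by
    apply HasDerivAt.fun_sum
    intro j hj
    exact hasDerivAt_Dfun (j+1) r (fun i hi => h i (by
      have := (Finset.mem_Icc.1 hj).2; omega))
  have hlast := hasDerivAt_Dfun (m+1) r h
  have := (hinv.sub (hsum.const_mul (1/2))).sub (hlast.const_mul (ε/2))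
  refine this.congr_deriv (Eq.symm ?_)
  rw [hderiv2, Finset.sum_neg_distrib]
  ring

lemma Icc_one_prod (f : ℕ → ℝ) (j : ℕ) :
    ∏ i ∈ Finset.Icc 1 j, f i = ∏ i ∈ Finset.range j, f (i+1) := by
  rw [show Finset.Icc 1 j = Finset.Ico 1 (j+1) from (Finset.Ico_add_one_right_eq_Icc 1 j).symm,
    Finset.prod_Ico_eq_prod_range]
  simp [add_comm]

lemma Icc_one_sum (f : ℕ → ℝ) (j : ℕ) :
    ∑ i ∈ Finset.Icc 1 j, f i = ∑ i ∈ Finset.range j, f (i+1) := by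
  rw [show Finset.Icc 1 j = Finset.Ico 1 (j+1) from (Finset.Ico_add_one_right_eq_Icc 1 j).symm,
    Finset.sum_Ico_eq_sum_range]
  simp [add_comm]

lemma Dfun_succ (j : ℕ) (r : ℝ) :
    Dfun (j+1) r = r⁻¹ * ∏ i ∈ Finset.Icc 1 j, (iterLog i r)⁻¹ := by
  rw [Dfun, Finset.prod_range_succ', Icc_one_prod, mul_comm]
  rfl

lemma sum_Dfun_range (j : ℕ) (r : ℝ) :
    ∑ i ∈ Finset.range (j+1), Dfun (i+1) r
      = r⁻¹ * (1 + ∑ i ∈ Finset.Icc 1 j, ∏ k ∈ Finset.Icc 1 i, (iterLog k r)⁻¹) := by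
  rw [Finset.sum_range_succ']
  have h0 : Dfun (0+1) r = r⁻¹ := by
    rw [Dfun_succ]; simp
  rw [h0]
  have h1 : ∀ i, Dfun (i+1+1) r = r⁻¹ * ∏ k ∈ Finset.Icc 1 (i+1), (iterLog k r)⁻¹ :=
    fun i => Dfun_succ (i+1) r
  rw [Finset.sum_congr rfl (fun i _ => h1 i), ← Finset.mul_sum,
    ← Icc_one_sum (fun i => ∏ k ∈ Finset.Icc 1 i, (iterLog k r)⁻¹)]
  ring

/-- The central one-dimensional computation: the logarithmic derivative data of `ψᵘ`
satisfies the Riccati-type equation corresponding to `(-Δ + W)ψ = 0`. -/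
lemma scalar_identity (d : ℕ) (c ε : ℝ) (m : ℕ) (r : ℝ) (hr : iterExp m < r) :
    hderiv2 (-(c/2) - (d:ℝ)/2) ε m r + (hderiv (-(c/2) - (d:ℝ)/2) ε m r)^2
      + ((d:ℝ) - 1)/r * hderiv (-(c/2) - (d:ℝ)/2) ε m r = Wu d c ε m r := by
  have hr0 : (0:ℝ) < r := lt_of_le_of_lt (iterExp_nonneg m) hr
  have hrne : r ≠ 0 := hr0.ne'
  have hS : ∑ j ∈ Finset.Icc 1 m, Dfun (j+1) r
      = r⁻¹ * ∑ k ∈ Finset.Icc 1 m, ∏ j ∈ Finset.Icc 1 k, (iterLog j r)⁻¹ := by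
    rw [Finset.mul_sum]
    exact Finset.sum_congr rfl (fun j _ => Dfun_succ j r)
  have hmid : ∑ j ∈ Finset.Icc 1 m, (Dfun (j+1) r * ∑ i ∈ Finset.range (j+1), Dfun (i+1) r)
      = r⁻¹ * r⁻¹ * ((∑ k ∈ Finset.Icc 1 m, ∏ j ∈ Finset.Icc 1 k, (iterLog j r)⁻¹)
        + ∑ i ∈ Finset.Icc 1 m, ∑ j ∈ Finset.Icc 1 i,
          (∏ k ∈ Finset.Icc 1 i, (iterLog k r)⁻¹) * ∏ l ∈ Finset.Icc 1 j, (iterLog l r)⁻¹) := by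
    have step : ∀ j ∈ Finset.Icc 1 m,
        Dfun (j+1) r * ∑ i ∈ Finset.range (j+1), Dfun (i+1) r
        = r⁻¹ * r⁻¹ * ((∏ k ∈ Finset.Icc 1 j, (iterLog k r)⁻¹)
            + ∑ i ∈ Finset.Icc 1 j, (∏ k ∈ Finset.Icc 1 j, (iterLog k r)⁻¹)
              * ∏ l ∈ Finset.Icc 1 i, (iterLog l r)⁻¹) := by
      intro j _
      rw [Dfun_succ, sum_Dfun_range, ← Finset.mul_sum]
      ring
    rw [Finset.sum_congr rfl step, ← Finset.mul_sum, Finset.sum_add_distrib]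
  have hQ := Dfun_succ m r
  have hlast := sum_Dfun_range m r
  rw [hderiv, hderiv2, hS, hmid, hQ, hlast, Wu]
  by_cases hm : m = 0
  · subst hm
    rw [if_pos rfl, show Finset.Icc 1 0 = (∅ : Finset ℕ) by decide]
    simp only [Finset.sum_empty, Finset.prod_empty]
    field_simp
    ring
  · rw [if_neg hm]
    generalize (∑ k ∈ Finset.Icc 1 m, ∏ j ∈ Finset.Icc 1 k, (iterLog j r)⁻¹) = S
    generalize (∏ j ∈ Finset.Icc 1 m, (iterLog j r)⁻¹) = Q
    generalize (∑ i ∈ Finset.Icc 1 m, ∑ j ∈ Finset.Icc 1 i,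
        (∏ k ∈ Finset.Icc 1 i, (iterLog k r)⁻¹) * ∏ l ∈ Finset.Icc 1 j, (iterLog l r)⁻¹) = T
    field_simp
    ring

lemma hasFDerivAt_norm_euclid {d : ℕ} (y : EuclideanSpace ℝ (Fin d)) (hy : y ≠ 0) :
    HasFDerivAt (fun z : EuclideanSpace ℝ (Fin d) => ‖z‖) (‖y‖⁻¹ • innerSL ℝ y) y := by
  have h1 : HasFDerivAt (fun z : EuclideanSpace ℝ (Fin d) => ‖z‖^2)
      (2 • (innerSL ℝ y)) y := (hasStrictFDerivAt_norm_sq y).hasFDerivAt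
  have hy2 : (‖y‖^2 : ℝ) ≠ 0 := pow_ne_zero 2 (norm_ne_zero_iff.2 hy)
  have h2 : HasDerivAt Real.sqrt (1 / (2 * Real.sqrt (‖y‖^2))) (‖y‖^2) :=
    Real.hasDerivAt_sqrt hy2
  have h3 := h2.comp_hasFDerivAt y h1
  have hfun : (Real.sqrt ∘ fun z : EuclideanSpace ℝ (Fin d) => ‖z‖^2)
      = fun z => ‖z‖ := by
    funext z; simp [Real.sqrt_sq (norm_nonneg z)]
  rw [hfun] at h3
  refine h3.congr_fderiv (Eq.symm ?_)
  ext v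
  simp only [ContinuousLinearMap.smul_apply, ContinuousLinearMap.coe_smul',
    Pi.smul_apply, smul_eq_mul, two_smul, ContinuousLinearMap.add_apply,
    Real.sqrt_sq (norm_nonneg y)]
  have : ‖y‖ ≠ 0 := norm_ne_zero_iff.2 hy
  ring

/-- The Laplacian of a radial function. -/
lemma lap_radial (d : ℕ) (g g' g'' : ℝ → ℝ) (U : Set ℝ) (hU : IsOpen U)
    (hU0 : ∀ r ∈ U, (0:ℝ) < r)
    (hg' : ∀ r ∈ U, HasDerivAt g (g' r) r) (hg'' : ∀ r ∈ U, HasDerivAt g' (g'' r) r)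
    (f : EuclideanSpace ℝ (Fin d) → ℝ)
    (hf : ∀ y : EuclideanSpace ℝ (Fin d), ‖y‖ ∈ U → f y = g ‖y‖)
    (x : EuclideanSpace ℝ (Fin d)) (hx : ‖x‖ ∈ U) :
    lap f x = g'' ‖x‖ + ((d:ℝ) - 1)/‖x‖ * g' ‖x‖ := by
  have hV : IsOpen {y : EuclideanSpace ℝ (Fin d) | ‖y‖ ∈ U} := hU.preimage continuous_norm
  have hne : ∀ y : EuclideanSpace ℝ (Fin d), ‖y‖ ∈ U → y ≠ 0 := by
    intro y hy h0
    rw [h0, norm_zero] at hy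
    exact lt_irrefl 0 (hU0 0 hy)
  have hxne : x ≠ 0 := hne x hx
  have hrx : ‖x‖ ≠ 0 := norm_ne_zero_iff.2 hxne
  have hfd : ∀ y : EuclideanSpace ℝ (Fin d), ‖y‖ ∈ U →
      HasFDerivAt f ((g' ‖y‖) • (‖y‖⁻¹ • innerSL ℝ y)) y := by
    intro y hy
    have h1 := (hg' ‖y‖ hy).comp_hasFDerivAt y (hasFDerivAt_norm_euclid y (hne y hy))
    apply h1.congr_of_eventuallyEq
    filter_upwards [hV.mem_nhds hy] with z hz
    exact hf z hz
  have key : ∀ i : Fin d,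
      fderiv ℝ (fun y => fderiv ℝ f y (EuclideanSpace.single i 1)) x (EuclideanSpace.single i 1)
      = g' ‖x‖ * (‖x‖⁻¹ + x i * (-(‖x‖^2)⁻¹ * (‖x‖⁻¹ * x i)))
        + (‖x‖⁻¹ * x i) * (g'' ‖x‖ * (‖x‖⁻¹ * x i)) := by
    intro i
    have hNx := hasFDerivAt_norm_euclid x hxne
    have hA : HasFDerivAt (fun y : EuclideanSpace ℝ (Fin d) => g' ‖y‖)
        ((g'' ‖x‖) • (‖x‖⁻¹ • innerSL ℝ x)) x :=
      (hg'' ‖x‖ hx).comp_hasFDerivAt x hNx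
    have hB : HasFDerivAt (fun y : EuclideanSpace ℝ (Fin d) => ‖y‖⁻¹)
        ((-(‖x‖^2)⁻¹) • (‖x‖⁻¹ • innerSL ℝ x)) x :=
      (hasDerivAt_inv hrx).comp_hasFDerivAt x hNx
    have hC : HasFDerivAt (fun y : EuclideanSpace ℝ (Fin d) => y i)
        (EuclideanSpace.proj (𝕜 := ℝ) i) x := (EuclideanSpace.proj (𝕜 := ℝ) i).hasFDerivAt
    have hBC := hB.fun_mul hC
    have hF := hA.fun_mul hBC
    have heq : (fun y : EuclideanSpace ℝ (Fin d) => fderiv ℝ f y (EuclideanSpace.single i 1))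
        =ᶠ[𝓝 x] (fun y => g' ‖y‖ * (‖y‖⁻¹ * y i)) := by
      filter_upwards [hV.mem_nhds hx] with z hz
      rw [(hfd z hz).fderiv]
      simp [EuclideanSpace.inner_single_right]
    rw [heq.fderiv_eq, hF.fderiv]
    simp [EuclideanSpace.inner_single_right, EuclideanSpace.single_apply]
    ring
  have hsum : ∑ i : Fin d, (x i)^2 = ‖x‖^2 := by
    rw [EuclideanSpace.norm_eq, Real.sq_sqrt (by positivity)]
    simp [sq_abs]
  rw [lap, Finset.sum_congr rfl (fun i _ => key i)]
  rw [Finset.sum_add_distrib]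
  have e1 : ∑ i : Fin d, g' ‖x‖ * (‖x‖⁻¹ + x i * (-(‖x‖^2)⁻¹ * (‖x‖⁻¹ * x i)))
      = (d : ℝ) * (g' ‖x‖ * ‖x‖⁻¹) + g' ‖x‖ * (-(‖x‖^2)⁻¹ * ‖x‖⁻¹) * ‖x‖^2 := by
    have : ∀ i : Fin d, g' ‖x‖ * (‖x‖⁻¹ + x i * (-(‖x‖^2)⁻¹ * (‖x‖⁻¹ * x i)))
        = g' ‖x‖ * ‖x‖⁻¹ + g' ‖x‖ * (-(‖x‖^2)⁻¹ * ‖x‖⁻¹) * (x i)^2 := fun i => by ring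
    rw [Finset.sum_congr rfl (fun i _ => this i), Finset.sum_add_distrib,
      Finset.sum_const, ← Finset.mul_sum, hsum]
    simp [nsmul_eq_mul]
  have e2 : ∑ i : Fin d, (‖x‖⁻¹ * x i) * (g'' ‖x‖ * (‖x‖⁻¹ * x i))
      = g'' ‖x‖ * (‖x‖⁻¹ * ‖x‖⁻¹) * ‖x‖^2 := by
    have : ∀ i : Fin d, (‖x‖⁻¹ * x i) * (g'' ‖x‖ * (‖x‖⁻¹ * x i))
        = g'' ‖x‖ * (‖x‖⁻¹ * ‖x‖⁻¹) * (x i)^2 := fun i => by ring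
    rw [Finset.sum_congr rfl (fun i _ => this i), ← Finset.mul_sum, hsum]
  rw [e1, e2]
  field_simp
  ring

lemma hfun_exp (c ε : ℝ) (d m : ℕ) (r : ℝ) (hr : iterExp m < r) :
    Real.exp (hfun (-(c/2) - (d:ℝ)/2) ε m r) =
      r ^ (-(c/2) - (d:ℝ)/2) * (∏ j ∈ Finset.Icc 1 m, (iterLog j r) ^ (-(1:ℝ)/2))
        * (iterLog m r) ^ (-(ε/2)) := by
  have hr0 : 0 < r := lt_of_le_of_lt (iterExp_nonneg m) hr
  have e1 : r ^ (-(c/2) - (d:ℝ)/2) = Real.exp (Real.log r * (-(c/2) - (d:ℝ)/2)) := by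
    rw [Real.rpow_def_of_pos hr0]
  have e2 : ∀ j ∈ Finset.Icc 1 m, (iterLog j r) ^ (-(1:ℝ)/2)
      = Real.exp (iterLog (j+1) r * (-(1:ℝ)/2)) := by
    intro j hj
    rw [Real.rpow_def_of_pos (iterLog_pos (Finset.mem_Icc.1 hj).2 hr)]
    rfl
  have e3 : (iterLog m r) ^ (-(ε/2)) = Real.exp (iterLog (m+1) r * (-(ε/2))) := by
    rw [Real.rpow_def_of_pos (iterLog_pos le_rfl hr)]
    rfl
  rw [e1, e3, Finset.prod_congr rfl e2, ← Real.exp_sum, ← Real.exp_add, ← Real.exp_add, hfun]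
  congr 1
  rw [show ∑ j ∈ Finset.Icc 1 m, iterLog (j+1) r * (-(1:ℝ)/2)
      = (∑ j ∈ Finset.Icc 1 m, iterLog (j+1) r) * (-(1:ℝ)/2) from (Finset.sum_mul ..).symm]
  ring

lemma psiU_eq (d : ℕ) (c ε : ℝ) (m : ℕ) (x : EuclideanSpace ℝ (Fin d))
    (hx : iterExp m < ‖x‖) :
    psiU d c ε m x = Real.exp (hfun (-(c/2) - (d:ℝ)/2) ε m ‖x‖) := by
  rw [hfun_exp c ε d m ‖x‖ hx, psiU]
  by_cases hm : m = 0
  · subst hm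
    have hx0 : (0:ℝ) < ‖x‖ := lt_of_le_of_lt (iterExp_nonneg 0) hx
    rw [if_pos rfl, show Finset.Icc 1 0 = (∅ : Finset ℕ) by decide]
    rw [Finset.prod_empty, mul_one, show iterLog 0 ‖x‖ = ‖x‖ from rfl,
      ← Real.rpow_add hx0]
    ring_nf
  · rw [if_neg hm]

/-- `ψᵘ_{c,m}` is smooth on `{|x| > e_m}` and satisfies
`(-Δ + W^{c,m}) ψᵘ_{c,m} = 0` pointwise there. -/
theorem psiU_zero_energy (d : ℕ) (hd : 0 < d) (c : ℝ) (hc : 0 ≤ c) (ε : ℝ) (hε : 0 < ε)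
    (m : ℕ) :
    ContDiffOn ℝ (⊤ : ℕ∞) (psiU d c ε m) {x : EuclideanSpace ℝ (Fin d) | iterExp m < ‖x‖} ∧
    ∀ x : EuclideanSpace ℝ (Fin d), iterExp m < ‖x‖ →
      -lap (psiU d c ε m) x + Wu d c ε m ‖x‖ * psiU d c ε m x = 0 := by
  set a : ℝ := -(c/2) - (d:ℝ)/2 with ha
  set U : Set ℝ := {r : ℝ | iterExp m < r} with hUdef
  have hUopen : IsOpen U := isOpen_lt continuous_const continuous_id
  have hU0 : ∀ r ∈ U, (0:ℝ) < r := fun r hr => lt_of_le_of_lt (iterExp_nonneg m) hr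
  have hnz : ∀ r ∈ U, ∀ i < m + 1, iterLog i r ≠ 0 :=
    fun r hr i hi => (iterLog_pos (Nat.lt_succ_iff.1 hi) hr).ne'
  set g : ℝ → ℝ := fun r => Real.exp (hfun a ε m r) with hg
  set g1 : ℝ → ℝ := fun r => hderiv a ε m r * g r with hg1def
  set g2 : ℝ → ℝ := fun r => (hderiv2 a ε m r + hderiv a ε m r ^ 2) * g r with hg2def
  have hg1 : ∀ r ∈ U, HasDerivAt g (g1 r) r := by
    intro r hr
    have := (hasDerivAt_hfun a ε m r (hnz r hr)).exp
    rw [hg1def, hg]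
    convert this using 1
    ring
  have hg2 : ∀ r ∈ U, HasDerivAt g1 (g2 r) r := by
    intro r hr
    have h1 := hasDerivAt_hderiv a ε m r (hnz r hr)
    have h2 := h1.fun_mul ((hasDerivAt_hfun a ε m r (hnz r hr)).exp)
    rw [hg2def]
    refine h2.congr_deriv (Eq.symm ?_)
    rw [hg]
    ring
  have hpsi : ∀ y : EuclideanSpace ℝ (Fin d), ‖y‖ ∈ U → psiU d c ε m y = g ‖y‖ :=
    fun y hy => psiU_eq d c ε m y hy
  constructor
  · refine ContDiffOn.congr ?_ (fun y hy => hpsi y hy)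
    intro y hy
    have hy' : ‖y‖ ∈ U := hy
    have hyne : y ≠ 0 := by
      intro h0
      rw [h0, norm_zero] at hy'
      exact lt_irrefl 0 (hU0 0 hy')
    have h1 : ContDiffAt ℝ (⊤ : ℕ∞) g ‖y‖ :=
      Real.contDiff_exp.contDiffAt.comp _ (contDiffAt_hfun a ε m ‖y‖ (hnz _ hy'))
    exact (h1.comp y (contDiffAt_norm ℝ hyne)).contDiffWithinAt
  · intro x hx
    have hx' : ‖x‖ ∈ U := hx
    have hlap := lap_radial d g g1 g2 U hUopen hU0 hg1 hg2 (psiU d c ε m) hpsi x hx'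
    rw [hlap, hpsi x hx']
    have hid := scalar_identity d c ε m ‖x‖ hx
    have : g2 ‖x‖ + ((d:ℝ) - 1)/‖x‖ * g1 ‖x‖ = Wu d c ε m ‖x‖ * g ‖x‖ := by
      rw [hg1def, hg2def, ← hid]
      ring
    rw [this]
    ring
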